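/- Let A be a (possibly noncommutative) ring and T, U ∈ M_n(A) matrices such that T·U = 1 = U·T. Suppose c : Fin n × Fin n × Fin n × Fin n → A is a family of central scalars and the 'FRT relations' ∑_{k,ℓ} c(i,j,k,ℓ)·T_{k r}·T_{ℓ s} = ∑_{k,ℓ} T_{i k}·T_{j ℓ}·c(k,ℓ,r,s) hold for all i,j,r,s. Then the 'opposite' relations ∑_{k,ℓ} c(i,j,k,ℓ)·U_{ℓ s}·U_{k r} = ∑_{k,ℓ} U_{j ℓ}·U_{i k}·c(k,ℓ,r,s) hold for all i,j,r,s. -/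

import Mathlib

/-- The FRT-type relations for an invertible matrix `T` imply the opposite relations
for its inverse `U`, provided the coefficients `c` are central. -/
theorem stmt2 {A : Type*} [Ring A] {n : ℕ}
    (c : Fin n → Fin n → Fin n → Fin n → A)
    (hc : ∀ i j k l, c i j k l ∈ Set.center A)
    (T U : Matrix (Fin n) (Fin n) A)
    (hTU : T * U = 1) (hUT : U * T = 1)
    (hFRT : ∀ i j r s, ∑ l, ∑ m, c i j l m * T l r * T m s =
      ∑ l, ∑ m, T i l * T j m * c l m r s) :
    ∀ i j r s, ∑ l, ∑ m, c i j l m * U m s * U l r =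
      ∑ l, ∑ m, U j m * U i l * c l m r s := by
  have hT : ∀ a b, (∑ k, T a k * U k b) = if a = b then (1:A) else 0 := by
    intro a b
    have h := congrFun (congrFun hTU a) b
    simpa [Matrix.mul_apply, Matrix.one_apply] using h
  have hU : ∀ a b, (∑ k, U a k * T k b) = if a = b then (1:A) else 0 := by
    intro a b
    have h := congrFun (congrFun hUT a) b
    simpa [Matrix.mul_apply, Matrix.one_apply] using h
  -- package into big matrices
  set C : Matrix (Fin n × Fin n) (Fin n × Fin n) A := fun p q => c p.1 p.2 q.1 q.2 with hC
  set P : Matrix (Fin n × Fin n) (Fin n × Fin n) A := fun p q => T p.1 q.1 * T p.2 q.2 with hP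
  set R : Matrix (Fin n × Fin n) (Fin n × Fin n) A := fun p q => U p.2 q.2 * U p.1 q.1 with hR
  have hCP : C * P = P * C := by
    ext ⟨i, j⟩ ⟨r, s⟩
    simp only [Matrix.mul_apply, Fintype.sum_prod_type]; simp only [hC, hP]
    simpa [mul_assoc] using hFRT i j r s
  have hPR : P * R = 1 := by
    ext ⟨i, j⟩ ⟨r, s⟩
    simp only [Matrix.mul_apply, Fintype.sum_prod_type]; simp only [hP, hR]
    have : (∑ k, ∑ l, T i k * T j l * (U l s * U k r))
        = ∑ k, T i k * ((∑ l, T j l * U l s) * U k r) := by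
      refine Finset.sum_congr rfl fun k _ => ?_
      rw [Finset.sum_mul, Finset.mul_sum]
      exact Finset.sum_congr rfl fun l _ => by noncomm_ring
    rw [this, hT j s]
    by_cases hjs : j = s <;>
      simp [hjs, hT i r, Matrix.one_apply, Prod.ext_iff, and_comm]
  have hRP : R * P = 1 := by
    ext ⟨i, j⟩ ⟨r, s⟩
    simp only [Matrix.mul_apply, Fintype.sum_prod_type]; simp only [hP, hR]
    have : (∑ k, ∑ l, U j l * U i k * (T k r * T l s))
        = ∑ k, ∑ l, U j l * ((U i k * T k r) * T l s) := by
      refine Finset.sum_congr rfl fun k _ => Finset.sum_congr rfl fun l _ => by noncomm_ring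
    rw [this]
    have : (∑ k, ∑ l, U j l * ((U i k * T k r) * T l s))
        = ∑ l, U j l * ((∑ k, U i k * T k r) * T l s) := by
      rw [Finset.sum_comm]
      refine Finset.sum_congr rfl fun l _ => ?_
      rw [← Finset.mul_sum, Finset.sum_mul]
    rw [this, hU i r]
    by_cases hir : i = r <;>
      simp [hir, hU j s, Matrix.one_apply, Prod.ext_iff]
  have hCR : C * R = R * C := by
    calc C * R = (R * P) * (C * R) := by rw [hRP, one_mul]
    _ = R * ((P * C) * R) := by noncomm_ring
    _ = R * ((C * P) * R) := by rw [hCP]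
    _ = (R * C) * (P * R) := by noncomm_ring
    _ = R * C := by rw [hPR, mul_one]
  intro i j r s
  have h := congrFun (congrFun hCR (i, j)) (r, s)
  simp only [Matrix.mul_apply, Fintype.sum_prod_type] at h; simp only [hC, hR] at h
  calc ∑ l, ∑ m, c i j l m * U m s * U l r
      = ∑ l, ∑ m, c i j l m * (U m s * U l r) := by
        exact Finset.sum_congr rfl fun l _ => Finset.sum_congr rfl fun m _ => by rw [mul_assoc]
    _ = ∑ l, ∑ m, U j m * U i l * c l m r s := by
        rw [h]
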